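/- There exist a complex Hilbert space H and a 4×4 magic matrix u = (u_{ij}) over the C*-algebra B(H) of bounded operators on H such that the unital subalgebra of B(H) generated by the sixteen entries u_{ij} is infinite-dimensional as a complex vector space. -/

import Mathlib

noncomputable section
open scoped ComplexOrder

abbrev Fib := EuclideanSpace ℂ (Fin 2)
abbrev Hsp := lp (fun _ : ℕ => Fib) 2

example : CompleteSpace Hsp := by infer_instance
example : InnerProductSpace ℂ Hsp := by infer_instance

-- membership
theorem diag_mem (A : ℕ → (Fib →L[ℂ] Fib)) (hA : ∀ n, ‖A n‖ ≤ 1) (f : Hsp) :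
    Memℓp (fun n => A n (f n)) 2 := by
  apply memℓp_gen
  have hsum : Summable fun n => ‖f n‖ ^ (2 : ENNReal).toReal := (lp.memℓp f).summable (by norm_num)
  refine hsum.of_nonneg_of_le (fun n => ?_) (fun n => ?_)
  · positivity
  · apply Real.rpow_le_rpow (norm_nonneg _) _ (by norm_num)
    calc ‖A n (f n)‖ ≤ ‖A n‖ * ‖f n‖ := (A n).le_opNorm _
    _ ≤ 1 * ‖f n‖ := by gcongr; exact hA n
    _ = ‖f n‖ := one_mul _

def diagL (A : ℕ → (Fib →L[ℂ] Fib)) (hA : ∀ n, ‖A n‖ ≤ 1) : Hsp →ₗ[ℂ] Hsp where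
  toFun f := ⟨fun n => A n (f n), diag_mem A hA f⟩
  map_add' f g := by ext n; simp [lp.coeFn_add]; rfl
  map_smul' c f := by ext n; simp [lp.coeFn_smul]

theorem diagL_norm (A : ℕ → (Fib →L[ℂ] Fib)) (hA : ∀ n, ‖A n‖ ≤ 1) (f : Hsp) :
    ‖diagL A hA f‖ ≤ 1 * ‖f‖ := by
  rw [one_mul]
  refine lp.norm_le_of_tsum_le (by norm_num) (norm_nonneg f) ?_
  rw [lp.norm_rpow_eq_tsum (p := 2) (by norm_num) f]
  refine Summable.tsum_le_tsum (fun n => ?_) ?_ ?_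
  · apply Real.rpow_le_rpow (norm_nonneg _) _ (by norm_num)
    calc ‖A n (f n)‖ ≤ ‖A n‖ * ‖f n‖ := (A n).le_opNorm _
    _ ≤ 1 * ‖f n‖ := by gcongr; exact hA n
    _ = ‖f n‖ := one_mul _
  · exact (lp.memℓp (diagL A hA f)).summable (by norm_num)
  · exact (lp.memℓp f).summable (by norm_num)

def diag (A : ℕ → (Fib →L[ℂ] Fib)) (hA : ∀ n, ‖A n‖ ≤ 1) : Hsp →L[ℂ] Hsp :=
  (diagL A hA).mkContinuous 1 (diagL_norm A hA)

@[simp] theorem diag_apply (A : ℕ → (Fib →L[ℂ] Fib)) (hA : ∀ n, ‖A n‖ ≤ 1) (f : Hsp) (n : ℕ) :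
    (diag A hA f) n = A n (f n) := rfl

theorem diag_single (A : ℕ → (Fib →L[ℂ] Fib)) (hA : ∀ n, ‖A n‖ ≤ 1) (n : ℕ) (v : Fib) :
    diag A hA (lp.single 2 n v) = lp.single 2 n (A n v) := by
  apply lp.ext
  funext m
  by_cases h : m = n
  · subst h
    simp [lp.single_apply_self]
  · simp [lp.single_apply_ne _ _ _ h, Pi.single_eq_of_ne h]

theorem diag_idem (A : ℕ → (Fib →L[ℂ] Fib)) (hA : ∀ n, ‖A n‖ ≤ 1)
    (h : ∀ n, IsIdempotentElem (A n)) : IsIdempotentElem (diag A hA) := by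
  unfold IsIdempotentElem
  refine ContinuousLinearMap.ext fun f => ?_
  apply lp.ext
  funext n
  show A n (A n (f n)) = A n (f n)
  conv_rhs => rw [← h n]
  rfl

theorem diag_sa (A : ℕ → (Fib →L[ℂ] Fib)) (hA : ∀ n, ‖A n‖ ≤ 1)
    (h : ∀ n, IsSelfAdjoint (A n)) : IsSelfAdjoint (diag A hA) := by
  rw [ContinuousLinearMap.isSelfAdjoint_iff_isSymmetric]
  intro f g
  rw [lp.inner_eq_tsum, lp.inner_eq_tsum]
  refine tsum_congr fun n => ?_
  exact (h n).isSymmetric (f n) (g n)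

theorem proj_norm_le_one {X : Type*} [NormedAddCommGroup X] [InnerProductSpace ℂ X]
    [CompleteSpace X] (a : X →L[ℂ] X) (h1 : IsSelfAdjoint a) (h2 : IsIdempotentElem a) :
    ‖a‖ ≤ 1 := by
  by_cases h : a = 0
  · simp [h]
  · have hn : 0 < ‖a‖ := norm_pos_iff.mpr h
    have : ‖a‖ * ‖a‖ = ‖a‖ := by
      rw [← CStarRing.norm_star_mul_self, h1.star_eq, h2]
    nlinarith

def cseq (n : ℕ) : ℝ := 1 / (n + 2)
def aseq (n : ℕ) : ℝ := Real.sqrt (cseq n)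
def bseq (n : ℕ) : ℝ := Real.sqrt (1 - cseq n)

theorem cseq_nonneg (n : ℕ) : 0 ≤ cseq n := by unfold cseq; positivity
theorem cseq_le_one (n : ℕ) : cseq n ≤ 1 := by
  unfold cseq
  rw [div_le_one (by positivity)]
  linarith [Nat.cast_nonneg (α := ℝ) n]
theorem aseq_sq (n : ℕ) : aseq n ^ 2 = cseq n := Real.sq_sqrt (cseq_nonneg n)
theorem bseq_sq (n : ℕ) : bseq n ^ 2 = 1 - cseq n := Real.sq_sqrt (by linarith [cseq_le_one n])
theorem cseq_inj : Function.Injective cseq := by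
  intro m n h
  unfold cseq at h
  field_simp at h
  exact Nat.add_right_cancel (by exact_mod_cast h.symm)

def Pm : Matrix (Fin 2) (Fin 2) ℂ := !![1, 0; 0, 0]
def Qm (n : ℕ) : Matrix (Fin 2) (Fin 2) ℂ :=
  !![(aseq n : ℂ) ^ 2, (aseq n : ℂ) * (bseq n : ℂ);
     (aseq n : ℂ) * (bseq n : ℂ), (bseq n : ℂ) ^ 2]

theorem Pm_sa : IsSelfAdjoint Pm := by
  show star Pm = Pm
  rw [Matrix.star_eq_conjTranspose]
  ext i j
  fin_cases i <;> fin_cases j <;> simp [Pm]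

theorem Pm_idem : IsIdempotentElem Pm := by
  show Pm * Pm = Pm
  ext i j
  fin_cases i <;> fin_cases j <;> simp [Pm, Matrix.mul_apply, Fin.sum_univ_two]

theorem Qm_sa (n : ℕ) : IsSelfAdjoint (Qm n) := by
  show star (Qm n) = Qm n
  rw [Matrix.star_eq_conjTranspose]
  ext i j
  fin_cases i <;> fin_cases j <;>
    simp [Qm, Matrix.conjTranspose_apply, ← Complex.ofReal_pow, ← Complex.ofReal_mul]

theorem sq_add_sq (n : ℕ) : (aseq n : ℂ) ^ 2 + (bseq n : ℂ) ^ 2 = 1 := by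
  rw [← Complex.ofReal_pow, ← Complex.ofReal_pow, aseq_sq, bseq_sq]
  push_cast
  ring

theorem Qm_idem (n : ℕ) : IsIdempotentElem (Qm n) := by
  show Qm n * Qm n = Qm n
  have h := sq_add_sq n
  unfold Qm
  rw [Matrix.mul_fin_two]
  apply Matrix.ext
  simp only [Fin.forall_fin_two, Matrix.of_apply, Matrix.cons_val_zero, Matrix.cons_val_one, Matrix.head_cons,
    Matrix.cons_val', Matrix.empty_val', Matrix.cons_val_fin_one, Matrix.head_fin_const]
  refine ⟨⟨?_, ?_⟩, ?_, ?_⟩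
  · linear_combination ((aseq n : ℂ) ^ 2) * h
  · linear_combination ((aseq n : ℂ) * (bseq n : ℂ)) * h
  · linear_combination ((aseq n : ℂ) * (bseq n : ℂ)) * h
  · linear_combination ((bseq n : ℂ) ^ 2) * h

def Pc : Fib →L[ℂ] Fib := Matrix.toEuclideanCLM (𝕜 := ℂ) Pm
def Qc (n : ℕ) : Fib →L[ℂ] Fib := Matrix.toEuclideanCLM (𝕜 := ℂ) (Qm n)

theorem Pc_sa : IsSelfAdjoint Pc := by
  show star _ = _
  rw [Pc, ← map_star, Pm_sa.star_eq]

theorem Qc_sa (n : ℕ) : IsSelfAdjoint (Qc n) := by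
  show star _ = _
  rw [Qc, ← map_star, (Qm_sa n).star_eq]

theorem Pc_idem : IsIdempotentElem Pc := by
  show _ * _ = _
  rw [Pc, ← map_mul, Pm_idem]

theorem Qc_idem (n : ℕ) : IsIdempotentElem (Qc n) := by
  show _ * _ = _
  rw [Qc, ← map_mul, Qm_idem n]

theorem Pc_norm : ‖Pc‖ ≤ 1 := proj_norm_le_one _ Pc_sa Pc_idem
theorem Qc_norm (n : ℕ) : ‖Qc n‖ ≤ 1 := proj_norm_le_one _ (Qc_sa n) (Qc_idem n)

def e₀ : Fib := (WithLp.equiv 2 (Fin 2 → ℂ)).symm ![1, 0]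

theorem e₀_ne : e₀ ≠ 0 := by
  intro h
  have := congrArg (fun v => WithLp.equiv 2 (Fin 2 → ℂ) v 0) h
  simp [e₀] at this

theorem fiber_eigen (n : ℕ) : Pc (Qc n (Pc e₀)) = ((cseq n : ℝ) : ℂ) • e₀ := by
  apply (WithLp.equiv 2 (Fin 2 → ℂ)).injective
  rw [Pc, Qc, e₀]
  simp only [WithLp.equiv_apply, WithLp.equiv_symm_apply, Matrix.ofLp_toEuclideanCLM, Matrix.toLin'_apply, Equiv.apply_symm_apply,
    WithLp.ofLp_smul, WithLp.ofLp_toLp]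
  have ha : (aseq n : ℂ) ^ 2 = (cseq n : ℂ) := by
    rw [← Complex.ofReal_pow, aseq_sq]
  funext i
  fin_cases i <;>
    simp [Pm, Qm, Matrix.mulVec, dotProduct, Fin.sum_univ_two, ha]

def pOp : Hsp →L[ℂ] Hsp := diag (fun _ => Pc) (fun _ => Pc_norm)
def qOp : Hsp →L[ℂ] Hsp := diag Qc Qc_norm
def xOp : Hsp →L[ℂ] Hsp := pOp * qOp * pOp

theorem single_e₀_ne (n : ℕ) : (lp.single (E := fun _ : ℕ => Fib) 2 n e₀ : Hsp) ≠ 0 := by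
  intro h
  apply e₀_ne
  have h2 : (lp.single (E := fun _ : ℕ => Fib) 2 n e₀) n = (0 : Hsp) n := by rw [h]
  simpa [lp.single_apply_self] using h2

theorem xOp_single (n : ℕ) :
    xOp (lp.single 2 n e₀) = ((cseq n : ℝ) : ℂ) • lp.single 2 n e₀ := by
  show pOp (qOp (pOp (lp.single 2 n e₀))) = _
  rw [pOp, qOp, diag_single, diag_single, diag_single, fiber_eigen, lp.single_smul]

theorem xOp_pow_single (k n : ℕ) :
    (xOp ^ k) (lp.single 2 n e₀) = ((cseq n : ℝ) : ℂ) ^ k • lp.single 2 n e₀ := by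
  induction k with
  | zero => simp
  | succ k ih =>
    rw [pow_succ, ContinuousLinearMap.mul_apply, xOp_single, map_smul, ih, smul_smul, pow_succ]
    ring_nf

theorem xOp_powers_li : LinearIndependent ℂ (fun k : ℕ => xOp ^ k) := by
  rw [linearIndependent_iff']
  intro s g hg k hk
  set P : Polynomial ℂ := ∑ j ∈ s, Polynomial.C (g j) * Polynomial.X ^ j with hPdef
  have hroot : ∀ n : ℕ, P.IsRoot ((cseq n : ℝ) : ℂ) := by
    intro n
    have h1 := congrArg (fun T : Hsp →L[ℂ] Hsp => T (lp.single 2 n e₀)) hg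
    simp only [ContinuousLinearMap.coe_sum', Finset.sum_apply,
      ContinuousLinearMap.coe_smul', Pi.smul_apply, ContinuousLinearMap.zero_apply,
      xOp_pow_single] at h1
    have h2 : (∑ j ∈ s, g j * ((cseq n : ℝ) : ℂ) ^ j) • (lp.single 2 n e₀ : Hsp) = 0 := by
      rw [Finset.sum_smul]
      simpa [smul_smul] using h1
    rcases smul_eq_zero.mp h2 with h | h
    · simpa [Polynomial.IsRoot, hPdef, Polynomial.eval_finset_sum] using h
    · exact absurd h (single_e₀_ne n)
  have hP : P = 0 := by
    apply Polynomial.eq_zero_of_infinite_isRoot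
    apply Set.infinite_of_injective_forall_mem
      (f := fun n : ℕ => ((cseq n : ℝ) : ℂ))
    · exact fun m n h => cseq_inj (Complex.ofReal_injective h)
    · exact hroot
  have := congrArg (fun Q : Polynomial ℂ => Q.coeff k) hP
  simpa [hPdef, Polynomial.finset_sum_coeff, Polynomial.coeff_C_mul, Polynomial.coeff_X_pow,
    Finset.sum_ite_eq' s k, hk] using this

theorem pOp_sa : IsSelfAdjoint pOp := diag_sa _ _ fun _ => Pc_sa
theorem pOp_idem : IsIdempotentElem pOp := diag_idem _ _ fun _ => Pc_idem
theorem qOp_sa : IsSelfAdjoint qOp := diag_sa _ _ Qc_sa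
theorem qOp_idem : IsIdempotentElem qOp := diag_idem _ _ Qc_idem

attribute [irreducible] pOp qOp

def uu (i j : Fin 4) : Hsp →L[ℂ] Hsp :=
  if i = j then (if i.val < 2 then pOp else qOp)
  else if (i = 0 ∧ j = 1) ∨ (i = 1 ∧ j = 0) then 1 - pOp
  else if (i = 2 ∧ j = 3) ∨ (i = 3 ∧ j = 2) then 1 - qOp
  else 0

theorem uu_conds (i j : Fin 4) : IsSelfAdjoint (uu i j) ∧ IsIdempotentElem (uu i j) := by
  unfold uu
  split_ifs
  · exact ⟨pOp_sa, pOp_idem⟩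
  · exact ⟨qOp_sa, qOp_idem⟩
  · exact ⟨(IsSelfAdjoint.one _).sub pOp_sa, pOp_idem.one_sub⟩
  · exact ⟨(IsSelfAdjoint.one _).sub qOp_sa, qOp_idem.one_sub⟩
  · exact ⟨IsSelfAdjoint.zero _, IsIdempotentElem.zero⟩

theorem uu_row (i : Fin 4) : ∑ j, uu i j = 1 := by
  rw [Fin.sum_univ_four]
  fin_cases i
  · show pOp + (1 - pOp) + 0 + 0 = 1
    abel
  · show (1 - pOp) + pOp + 0 + 0 = 1
    abel
  · show 0 + 0 + qOp + (1 - qOp) = 1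
    abel
  · show 0 + 0 + (1 - qOp) + qOp = 1
    abel

theorem uu_col (j : Fin 4) : ∑ i, uu i j = 1 := by
  rw [Fin.sum_univ_four]
  fin_cases j
  · show pOp + (1 - pOp) + 0 + 0 = 1
    abel
  · show (1 - pOp) + pOp + 0 + 0 = 1
    abel
  · show 0 + 0 + qOp + (1 - qOp) = 1
    abel
  · show 0 + 0 + (1 - qOp) + qOp = 1
    abel

theorem uu00 : uu 0 0 = pOp := rfl
theorem uu22 : uu 2 2 = qOp := rfl

set_option maxHeartbeats 1000000 in
set_option synthInstance.maxHeartbeats 400000 in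
theorem not_fd :
    ¬ FiniteDimensional ℂ
      (Algebra.adjoin ℂ {x : Hsp →L[ℂ] Hsp | ∃ i j, uu i j = x}) := by
  intro hfd
  have hp : pOp ∈ Algebra.adjoin ℂ {x : Hsp →L[ℂ] Hsp | ∃ i j, uu i j = x} :=
    Algebra.subset_adjoin ⟨0, 0, uu00⟩
  have hq : qOp ∈ Algebra.adjoin ℂ {x : Hsp →L[ℂ] Hsp | ∃ i j, uu i j = x} :=
    Algebra.subset_adjoin ⟨2, 2, uu22⟩
  have hx : xOp ∈ Algebra.adjoin ℂ {x : Hsp →L[ℂ] Hsp | ∃ i j, uu i j = x} :=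
    mul_mem (mul_mem hp hq) hp
  have hy : LinearIndependent ℂ
      (fun k : ℕ => (⟨xOp, hx⟩ : Algebra.adjoin ℂ _) ^ k) := by
    apply LinearIndependent.of_comp (Subalgebra.val _).toLinearMap
    have he : ((Subalgebra.val (Algebra.adjoin ℂ _)).toLinearMap ∘
        fun k : ℕ => (⟨xOp, hx⟩ : Algebra.adjoin ℂ _) ^ k) = fun k : ℕ => xOp ^ k := by
      funext k
      simp
    rw [he]
    exact xOp_powers_li
  haveI := hy.finite
  exact not_finite ℕ

theorem exists_magic_four_by_four_infinite_dimensional :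
    ∃ (H : Type) (_ : NormedAddCommGroup H) (_ : InnerProductSpace ℂ H)
      (_ : CompleteSpace H) (u : Fin 4 → Fin 4 → H →L[ℂ] H),
      (∀ i j, IsSelfAdjoint (u i j) ∧ IsIdempotentElem (u i j)) ∧
      (∀ i, ∑ j, u i j = 1) ∧ (∀ j, ∑ i, u i j = 1) ∧
      ¬ FiniteDimensional ℂ
        (Algebra.adjoin ℂ {x : H →L[ℂ] H | ∃ i j, u i j = x}) := by
  exact ⟨Hsp, inferInstance, inferInstance, inferInstance, uu, uu_conds, uu_row, uu_col, not_fd⟩
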